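/- arXiv:2304.07122 — 3 statements merged into one kernel-verified Lean document; each statement's English description precedes it below -/
import Mathlib

section
/- Let A have spectral radius less than 1, P∞ = dlyap(A, Vw), and let V_k satisfy V_{k+1} = A V_k Aᵀ + Vw with V_N ⪯ P∞ given. Then the tail sum S_N = Σ_{k=N}^{∞} (P∞ − V_k) converges and equals dlyap(A, P∞) − dlyap(A, V_N). -/
open Matrix

/-- `A` has spectral radius strictly less than one. -/
def SpectralRadiusLtOne {n : Type*} [Fintype n] [DecidableEq n] (A : Matrix n n ℝ) : Prop :=
  ∀ z ∈ spectrum ℂ (A.map (algebraMap ℝ ℂ)), ‖z‖ < 1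

open Filter

section Aux

attribute [local instance] Matrix.frobeniusSeminormedAddCommGroup
  Matrix.frobeniusNormedAddCommGroup Matrix.frobeniusNormedSpace
  Matrix.frobeniusNormedRing Matrix.frobeniusNormedAlgebra

variable {n : Type*} [Fintype n] [DecidableEq n]

/-- entry bound by Frobenius norm -/
lemma aux_nnnorm_entry_le (M : Matrix n n ℝ) (p q : n) : ‖M p q‖₊ ≤ ‖M‖₊ := by
  rw [Matrix.frobenius_nnnorm_def]
  have h1 : ‖M p q‖₊ ^ (2 : ℝ) ≤ ∑ i, ∑ j, ‖M i j‖₊ ^ (2 : ℝ) := by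
    calc ‖M p q‖₊ ^ (2 : ℝ) ≤ ∑ j, ‖M p j‖₊ ^ (2 : ℝ) :=
          Finset.single_le_sum (f := fun j => ‖M p j‖₊ ^ (2 : ℝ))
            (fun _ _ => zero_le) (Finset.mem_univ q)
      _ ≤ ∑ i, ∑ j, ‖M i j‖₊ ^ (2 : ℝ) :=
          Finset.single_le_sum (f := fun i => ∑ j, ‖M i j‖₊ ^ (2 : ℝ))
            (fun _ _ => zero_le) (Finset.mem_univ p)
  calc ‖M p q‖₊ = (‖M p q‖₊ ^ (2 : ℝ)) ^ (1 / 2 : ℝ) := by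
        rw [← NNReal.rpow_mul]; norm_num
    _ ≤ (∑ i, ∑ j, ‖M i j‖₊ ^ (2 : ℝ)) ^ (1 / 2 : ℝ) :=
        NNReal.rpow_le_rpow h1 (by norm_num)

/-- Geometric decay of powers from spectral radius condition. -/
lemma aux_pow_nnnorm_le (A : Matrix n n ℝ)
    (hspec : ∀ z ∈ spectrum ℂ (A.map (algebraMap ℝ ℂ)), ‖z‖ < 1) :
    ∃ r : NNReal, r < 1 ∧ ∀ᶠ j in atTop, ‖A ^ j‖₊ ≤ r ^ j := by
  set Ac : Matrix n n ℂ := A.map (algebraMap ℝ ℂ) with hAc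
  have hmap : ∀ j : ℕ, ‖A ^ j‖₊ = ‖Ac ^ j‖₊ := by
    intro j
    have : Ac ^ j = (A ^ j).map (algebraMap ℝ ℂ) := by
      simp only [hAc, ← RingHom.mapMatrix_apply, ← map_pow]
    rw [this, Matrix.frobenius_nnnorm_map_eq]
    intro a
    simp [Complex.nnnorm_real]
  cases isEmpty_or_nonempty n with
  | inl h =>
    refine ⟨0, by norm_num, ?_⟩
    filter_upwards [eventually_ge_atTop 1] with j hj
    have : A ^ j = 0 := Subsingleton.elim _ _
    rw [this, nnnorm_zero]
    exact zero_le
  | inr h =>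
    haveI : Nontrivial (Matrix n n ℂ) := inferInstance
    haveI : CompleteSpace (Matrix n n ℂ) := FiniteDimensional.complete ℂ _
    have hsr : spectralRadius ℂ Ac < ((1 : NNReal) : ENNReal) := by
      refine spectrum.spectralRadius_lt_of_forall_lt Ac fun z hz => ?_
      have := hspec z hz
      rwa [← NNReal.coe_lt_coe, coe_nnnorm, NNReal.coe_one]
    obtain ⟨r, hr1, hr2⟩ := ENNReal.lt_iff_exists_nnreal_btwn.mp hsr
    have hglf := spectrum.pow_nnnorm_pow_one_div_tendsto_nhds_spectralRadius Ac
    have hev : ∀ᶠ j : ℕ in atTop, (‖Ac ^ j‖₊ : ENNReal) ^ (1 / (j : ℝ)) < (r : ENNReal) :=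
      hglf.eventually_lt_const hr1
    refine ⟨r, by exact_mod_cast hr2, ?_⟩
    filter_upwards [hev, eventually_ge_atTop 1] with j hj hj1
    have hj0 : (j : ℝ) ≠ 0 := Nat.cast_ne_zero.mpr (by omega)
    have h2 : ((‖Ac ^ j‖₊ : ENNReal) ^ (1 / (j : ℝ))) ^ (j : ℝ) ≤ (r : ENNReal) ^ (j : ℝ) :=
      ENNReal.rpow_le_rpow hj.le (Nat.cast_nonneg j)
    rw [← ENNReal.rpow_mul, one_div, inv_mul_cancel₀ hj0, ENNReal.rpow_one] at h2
    rw [ENNReal.rpow_natCast, ← ENNReal.coe_pow, ENNReal.coe_le_coe] at h2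
    rw [hmap]
    exact h2

/-- Entrywise geometric bound for `A^j M (A^j)ᵀ`. -/
lemma aux_geom_entry_bound (A : Matrix n n ℝ)
    (hspec : ∀ z ∈ spectrum ℂ (A.map (algebraMap ℝ ℂ)), ‖z‖ < 1) (M : Matrix n n ℝ) :
    ∃ C r : ℝ, 0 ≤ C ∧ 0 ≤ r ∧ r < 1 ∧
      ∀ᶠ j in atTop, ∀ p q : n, |(A ^ j * M * (A ^ j)ᵀ) p q| ≤ C * r ^ j := by
  obtain ⟨r₀, hr₀1, hr₀⟩ := aux_pow_nnnorm_le A hspec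
  refine ⟨‖M‖, (r₀ : ℝ) ^ 2, norm_nonneg _, by positivity, ?_, ?_⟩
  · have h1 : (r₀ : ℝ) < 1 := hr₀1
    nlinarith [r₀.coe_nonneg]
  · filter_upwards [hr₀] with j hj p q
    have key : ‖(A ^ j * M * (A ^ j)ᵀ) p q‖₊ ≤ (r₀ ^ j) * ‖M‖₊ * (r₀ ^ j) := by
      calc ‖(A ^ j * M * (A ^ j)ᵀ) p q‖₊ ≤ ‖A ^ j * M * (A ^ j)ᵀ‖₊ :=
            aux_nnnorm_entry_le _ p q
        _ ≤ ‖A ^ j * M‖₊ * ‖(A ^ j)ᵀ‖₊ := nnnorm_mul_le _ _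
        _ ≤ ‖A ^ j‖₊ * ‖M‖₊ * ‖(A ^ j)ᵀ‖₊ := by
            gcongr; exact nnnorm_mul_le _ _
        _ = ‖A ^ j‖₊ * ‖M‖₊ * ‖A ^ j‖₊ := by rw [Matrix.frobenius_nnnorm_transpose]
        _ ≤ (r₀ ^ j) * ‖M‖₊ * (r₀ ^ j) := by gcongr
    have h3 := (NNReal.coe_le_coe.mpr key)
    push_cast at h3
    rw [← Real.norm_eq_abs, ← coe_nnnorm]
    calc (‖(A ^ j * M * (A ^ j)ᵀ) p q‖₊ : ℝ) ≤ (r₀ : ℝ) ^ j * ‖M‖ * (r₀ : ℝ) ^ j := h3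
      _ = ‖M‖ * ((r₀ : ℝ) ^ 2) ^ j := by ring

end Aux

/-- Tail sum of the deviation of the variance recursion from the steady state:
with `P∞ = dlyap(A, Vw)`, `V_{k+1} = A V_k Aᵀ + Vw` for `k ≥ N` and `V_N ⪯ P∞`, the
series `S_N = Σ_{k=N}^∞ (P∞ − V_k)` converges and equals
`dlyap(A, P∞) − dlyap(A, V_N)`. -/
theorem terminal_cost_tail_sum
    {n : Type*} [Fintype n] [DecidableEq n]
    (A Vw Pinf : Matrix n n ℝ)
    (hspec : SpectralRadiusLtOne A) (hVw : Vw.PosSemidef)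
    (hPinf : A * Pinf * Aᵀ + Vw = Pinf)
    (N : ℕ) (V : ℕ → Matrix n n ℝ)
    (hrec : ∀ k, N ≤ k → V (k + 1) = A * V k * Aᵀ + Vw)
    (hVN : (Pinf - V N).PosSemidef)
    (X Y : Matrix n n ℝ)
    (hX : A * X * Aᵀ + Pinf = X)      -- X = dlyap(A, P∞)
    (hY : A * Y * Aᵀ + V N = Y) :     -- Y = dlyap(A, V_N)
    HasSum (fun j : ℕ => Pinf - V (N + j)) (X - Y) := by
  -- the fixed point equation for the difference E := X - Y
  have hE : A * (X - Y) * Aᵀ + (Pinf - V N) = X - Y := by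
    calc A * (X - Y) * Aᵀ + (Pinf - V N)
        = (A * X * Aᵀ + Pinf) - (A * Y * Aᵀ + V N) := by
          rw [mul_sub, sub_mul]; abel
      _ = X - Y := by rw [hX, hY]
  have hB : Pinf - V N = (X - Y) - A * (X - Y) * Aᵀ := (eq_sub_of_add_eq' hE)
  -- the deviation evolves as A^j (Pinf - V N) (A^j)ᵀ
  have hdev : ∀ j : ℕ, Pinf - V (N + j) = A ^ j * (Pinf - V N) * (A ^ j)ᵀ := by
    intro j
    induction j with
    | zero => simp
    | succ j ih =>
      have hr := hrec (N + j) (Nat.le_add_right _ _)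
      calc Pinf - V (N + (j + 1))
          = (A * Pinf * Aᵀ + Vw) - (A * V (N + j) * Aᵀ + Vw) := by
            rw [hPinf, ← hr]
            rfl
        _ = A * (Pinf - V (N + j)) * Aᵀ := by rw [mul_sub, sub_mul]; abel
        _ = A ^ (j + 1) * (Pinf - V N) * (A ^ (j + 1))ᵀ := by
            rw [ih, Matrix.transpose_pow, Matrix.transpose_pow,
              pow_succ' A j, pow_succ (Aᵀ) j]
            simp only [mul_assoc]
  -- telescoping partial sums
  have htel : ∀ m : ℕ, ∑ j ∈ Finset.range m, (A ^ j * (Pinf - V N) * (A ^ j)ᵀ)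
      = (X - Y) - A ^ m * (X - Y) * (A ^ m)ᵀ := by
    intro m
    induction m with
    | zero => simp
    | succ m ih =>
      rw [Finset.sum_range_succ, ih]
      have hstep : A ^ m * (Pinf - V N) * (A ^ m)ᵀ
          = A ^ m * (X - Y) * (A ^ m)ᵀ - A ^ (m + 1) * (X - Y) * (A ^ (m + 1))ᵀ := by
        rw [hB, mul_sub, sub_mul]
        congr 1
        rw [Matrix.transpose_pow, Matrix.transpose_pow, pow_succ A m, pow_succ' (Aᵀ) m]
        simp only [mul_assoc]
      rw [hstep]; abel
  -- geometric bounds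
  obtain ⟨C, r, hC, hr0, hr1, hbound⟩ := aux_geom_entry_bound A hspec (Pinf - V N)
  obtain ⟨C', r', hC', hr0', hr1', hbound'⟩ := aux_geom_entry_bound A hspec (X - Y)
  -- entrywise
  refine Pi.hasSum.mpr fun p => Pi.hasSum.mpr fun q => ?_
  have hsumm : Summable fun j : ℕ => (Pinf - V (N + j)) p q := by
    refine Summable.of_norm_bounded_eventually_nat
      ((summable_geometric_of_lt_one hr0 hr1).mul_left C) ?_
    filter_upwards [hbound] with j hj
    rw [hdev j]
    exact hj p q
  rw [hsumm.hasSum_iff_tendsto_nat]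
  -- partial sums of entries
  have hps : ∀ m : ℕ, ∑ j ∈ Finset.range m, (Pinf - V (N + j)) p q
      = (X - Y) p q - (A ^ m * (X - Y) * (A ^ m)ᵀ) p q := by
    intro m
    have hsum : ∑ j ∈ Finset.range m, (Pinf - V (N + j))
        = (X - Y) - A ^ m * (X - Y) * (A ^ m)ᵀ := by
      rw [← htel m]
      exact Finset.sum_congr rfl fun j _ => hdev j
    calc ∑ j ∈ Finset.range m, (Pinf - V (N + j)) p q
        = (∑ j ∈ Finset.range m, (Pinf - V (N + j))) p q :=
          (Matrix.sum_apply p q _ _).symm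
      _ = (X - Y) p q - (A ^ m * (X - Y) * (A ^ m)ᵀ) p q := by
          rw [hsum, Matrix.sub_apply]
  simp only [hps]
  have hz : Tendsto (fun m : ℕ => (A ^ m * (X - Y) * (A ^ m)ᵀ) p q) atTop (nhds 0) := by
    refine squeeze_zero_norm' ?_
      (by simpa using (tendsto_pow_atTop_nhds_zero_of_lt_one hr0' hr1').const_mul C')
    filter_upwards [hbound'] with m hm
    simpa [Real.norm_eq_abs] using hm p q
  simpa using (tendsto_const_nhds : Tendsto (fun _ : ℕ => (X - Y) p q) atTop _).sub hz
end

section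
/- (Closed-loop constraint satisfaction, Theorem 2 core step) Suppose cᵀz ≤ d − sqrt(cᵀVc)·Φ⁻¹(ρ) with ρ ∈ [1/2, 1), V ⪰ 0, and e ~ N(0, V'), where cᵀV'c ≤ cᵀVc. Then P(cᵀ(z + e) ≤ d) ≥ ρ. -/
open MeasureTheory ProbabilityTheory Matrix

/-- The CDF of the standard normal distribution. -/
noncomputable def stdNormalCDF : ℝ → ℝ := fun x => ProbabilityTheory.cdf (gaussianReal 0 1) x

/-- The quantile function (inverse CDF) of the standard normal distribution. -/
noncomputable def stdNormalCDFInv : ℝ → ℝ := Function.invFun stdNormalCDF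

open scoped NNReal ENNReal

lemma stdNormalCDF_eq (x : ℝ) :
    stdNormalCDF x = ((gaussianReal 0 1) (Set.Iic x)).toReal :=
  ProbabilityTheory.cdf_eq_real _ x

lemma aux_Ioc (a b : ℝ) (hab : a ≤ b) :
    (gaussianReal 0 1) (Set.Iic b) = (gaussianReal 0 1) (Set.Iic a)
      + (gaussianReal 0 1) (Set.Ioc a b) := by
  rw [← measure_union (Set.Iic_disjoint_Ioc le_rfl) measurableSet_Ioc]
  rw [Set.Iic_union_Ioc_eq_Iic hab]

lemma gauss_Ioc_pos (a b : ℝ) (hab : a < b) :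
    0 < (gaussianReal 0 1) (Set.Ioc a b) := by
  rw [gaussianReal_of_var_ne_zero 0 one_ne_zero]
  rw [pos_iff_ne_zero]
  intro h
  rw [withDensity_apply_eq_zero (measurable_gaussianPDF 0 1)] at h
  have : {x | gaussianPDF 0 1 x ≠ 0} = Set.univ := by
    ext x
    simp [(gaussianPDF_pos 0 one_ne_zero x).ne']
  rw [this, Set.univ_inter] at h
  simp [Real.volume_Ioc] at h
  linarith

lemma gaussianPDF_le_one (x : ℝ) : gaussianPDF 0 1 x ≤ 1 := by
  rw [gaussianPDF_def]
  rw [← ENNReal.ofReal_one]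
  apply ENNReal.ofReal_le_ofReal
  rw [gaussianPDFReal_def]
  have h1 : Real.exp (-(x - 0) ^ 2 / (2 * (1:ℝ≥0))) ≤ 1 := by
    rw [Real.exp_le_one_iff]
    have : (0:ℝ) ≤ (x - 0) ^ 2 := sq_nonneg _
    have h2 : (0:ℝ) < 2 * (1:ℝ≥0) := by norm_num
    apply div_nonpos_of_nonpos_of_nonneg <;> [linarith; positivity]
  have h2 : (Real.sqrt (2 * Real.pi * (1:ℝ≥0)))⁻¹ ≤ 1 := by
    rw [inv_le_one_iff₀]
    right
    rw [show ((2:ℝ) * Real.pi * (1:ℝ≥0)) = 2 * Real.pi by push_cast; ring]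
    nlinarith [Real.pi_gt_three, Real.sq_sqrt (by positivity : (0:ℝ) ≤ 2 * Real.pi),
      Real.sqrt_nonneg (2 * Real.pi)]
  calc (Real.sqrt (2 * Real.pi * (1:ℝ≥0)))⁻¹ * Real.exp (-(x - 0) ^ 2 / (2 * (1:ℝ≥0)))
      ≤ 1 * 1 := by
        apply mul_le_mul h2 h1 (Real.exp_nonneg _) zero_le_one
    _ = 1 := by ring

lemma gauss_Ioc_le (a b : ℝ) :
    (gaussianReal 0 1) (Set.Ioc a b) ≤ ENNReal.ofReal (b - a) := by
  rw [gaussianReal_of_var_ne_zero 0 one_ne_zero,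
    withDensity_apply _ measurableSet_Ioc]
  calc ∫⁻ x in Set.Ioc a b, gaussianPDF 0 1 x
      ≤ ∫⁻ _ in Set.Ioc a b, 1 :=
        lintegral_mono fun x => gaussianPDF_le_one x
    _ = volume (Set.Ioc a b) := by simp
    _ = ENNReal.ofReal (b - a) := Real.volume_Ioc

lemma stdNormalCDF_mono : Monotone stdNormalCDF := monotone_cdf _

lemma stdNormalCDF_sub_le {x y : ℝ} (hxy : y ≤ x) :
    stdNormalCDF x - stdNormalCDF y ≤ x - y := by
  rw [stdNormalCDF_eq, stdNormalCDF_eq, aux_Ioc y x hxy,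
    ENNReal.toReal_add (measure_ne_top _ _) (measure_ne_top _ _)]
  have h2 : ((gaussianReal 0 1) (Set.Ioc y x)).toReal ≤ x - y := by
    calc ((gaussianReal 0 1) (Set.Ioc y x)).toReal
        ≤ (ENNReal.ofReal (x - y)).toReal :=
          ENNReal.toReal_mono ENNReal.ofReal_ne_top (gauss_Ioc_le y x)
      _ = x - y := ENNReal.toReal_ofReal (by linarith)
  linarith

lemma stdNormalCDF_continuous : Continuous stdNormalCDF := by
  have hlip : LipschitzWith 1 stdNormalCDF := by
    apply LipschitzWith.of_dist_le_mul
    intro x y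
    rw [NNReal.coe_one, one_mul]
    wlog hxy : y ≤ x generalizing x y
    · rw [dist_comm, dist_comm x y]; exact this y x (le_of_not_ge hxy)
    rw [Real.dist_eq, Real.dist_eq,
      abs_of_nonneg (sub_nonneg.2 (stdNormalCDF_mono hxy)),
      abs_of_nonneg (by linarith : (0:ℝ) ≤ x - y)]
    exact stdNormalCDF_sub_le hxy
  exact hlip.continuous

lemma stdNormalCDF_strictMono : StrictMono stdNormalCDF := by
  intro a b hab
  rw [stdNormalCDF_eq, stdNormalCDF_eq, aux_Ioc a b hab.le,
    ENNReal.toReal_add (measure_ne_top _ _) (measure_ne_top _ _)]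
  have := gauss_Ioc_pos a b hab
  have h2 : 0 < ((gaussianReal 0 1) (Set.Ioc a b)).toReal :=
    ENNReal.toReal_pos this.ne' (measure_ne_top _ _)
  linarith

lemma gauss_neg_map :
    (gaussianReal 0 1).map (fun x => (-1 : ℝ) * x) = gaussianReal 0 1 := by
  rw [gaussianReal_map_const_mul (-1 : ℝ)]
  congr 1
  · ring
  · ext; norm_num

lemma gauss_singleton (x : ℝ) : (gaussianReal 0 1) {x} = 0 := by
  refine gaussianReal_absolutelyContinuous 0 one_ne_zero ?_
  simp

lemma stdNormalCDF_zero : stdNormalCDF 0 = 1 / 2 := by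
  have hmap := gauss_neg_map
  have h1 : (gaussianReal 0 1) (Set.Iic (0:ℝ)) = (gaussianReal 0 1) (Set.Ici (0:ℝ)) := by
    conv_lhs => rw [← hmap]
    rw [Measure.map_apply (by fun_prop) measurableSet_Iic]
    congr 1
    ext x
    simp
  have h2 : (gaussianReal 0 1) (Set.Ici (0:ℝ))
      = (gaussianReal 0 1) (Set.Ioi (0:ℝ)) := by
    apply le_antisymm
    · rw [← Set.Ioi_union_left]
      calc (gaussianReal 0 1) (Set.Ioi (0:ℝ) ∪ {0})
          ≤ (gaussianReal 0 1) (Set.Ioi (0:ℝ)) + (gaussianReal 0 1) {(0:ℝ)} :=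
            measure_union_le _ _
        _ = (gaussianReal 0 1) (Set.Ioi (0:ℝ)) := by rw [gauss_singleton]; simp
    · exact measure_mono Set.Ioi_subset_Ici_self
  have h3 : (gaussianReal 0 1) (Set.Iic (0:ℝ)) + (gaussianReal 0 1) (Set.Ioi (0:ℝ)) = 1 := by
    rw [← measure_union (Set.Iic_disjoint_Ioi le_rfl) measurableSet_Ioi,
      Set.Iic_union_Ioi, measure_univ]
  have h4 : (gaussianReal 0 1) (Set.Iic (0:ℝ)) + (gaussianReal 0 1) (Set.Iic (0:ℝ)) = 1 := by
    rw [h1, h2] at h3 ⊢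
    · exact h3
  rw [stdNormalCDF_eq]
  have h5 : ((gaussianReal 0 1) (Set.Iic (0:ℝ))).toReal
      + ((gaussianReal 0 1) (Set.Iic (0:ℝ))).toReal = 1 := by
    rw [← ENNReal.toReal_add (measure_ne_top _ _) (measure_ne_top _ _), h4]
    simp
  linarith

lemma stdNormalCDF_inv_spec {ρ : ℝ} (hρ : ρ ∈ Set.Ico (1/2 : ℝ) 1) :
    stdNormalCDF (stdNormalCDFInv ρ) = ρ := by
  obtain ⟨hρ1, hρ2⟩ := hρ
  have h0 : (0:ℝ) < ρ := by linarith
  have ha : ∃ a, stdNormalCDF a < ρ :=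
    ((tendsto_cdf_atBot (μ := gaussianReal 0 1)).eventually_lt_const h0).exists
  have hb : ∃ b, ρ < stdNormalCDF b :=
    ((tendsto_cdf_atTop (μ := gaussianReal 0 1)).eventually_const_lt hρ2).exists
  obtain ⟨a, ha⟩ := ha
  obtain ⟨b, hb⟩ := hb
  have hab : a ≤ b := by
    by_contra h
    exact absurd (stdNormalCDF_mono (le_of_not_ge h)) (by linarith)
  have := intermediate_value_Icc hab stdNormalCDF_continuous.continuousOn
  have hmem : ρ ∈ Set.Icc (stdNormalCDF a) (stdNormalCDF b) := ⟨ha.le, hb.le⟩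
  obtain ⟨x, _, hx⟩ := this hmem
  exact Function.invFun_eq ⟨x, hx⟩

lemma stdNormalCDF_inv_nonneg {ρ : ℝ} (hρ : ρ ∈ Set.Ico (1/2 : ℝ) 1) :
    0 ≤ stdNormalCDFInv ρ := by
  by_contra h
  have := stdNormalCDF_strictMono (lt_of_not_ge h)
  rw [stdNormalCDF_inv_spec hρ, stdNormalCDF_zero] at this
  exact absurd hρ.1 (by linarith)

/-- Theorem 2, core step: if the nominal state satisfies the tightened constraint
`cᵀz ≤ d − sqrt(cᵀVc)·Φ⁻¹(ρ)` with `ρ ∈ [1/2, 1)`, and `e` is a zero-mean Gaussian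
with covariance `V'` such that `cᵀV'c ≤ cᵀVc`, then `P(cᵀ(z + e) ≤ d) ≥ ρ`. -/
theorem closed_loop_constraint_satisfaction
    {n : Type*} [Fintype n]
    {Ω : Type*} [MeasurableSpace Ω] (μ : Measure Ω) [IsProbabilityMeasure μ]
    (V V' : Matrix n n ℝ) (hV : V.PosSemidef) (hV' : V'.PosSemidef)
    (c z : n → ℝ) (d ρ : ℝ) (hρ : ρ ∈ Set.Ico (1 / 2 : ℝ) 1)
    (hvar : c ⬝ᵥ V' *ᵥ c ≤ c ⬝ᵥ V *ᵥ c)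
    (e : Ω → n → ℝ)
    (hlaw : Measure.map (fun ω => c ⬝ᵥ e ω) μ
      = gaussianReal 0 (Real.toNNReal (c ⬝ᵥ V' *ᵥ c)))
    (hz : c ⬝ᵥ z ≤ d - Real.sqrt (c ⬝ᵥ V *ᵥ c) * stdNormalCDFInv ρ) :
    ρ ≤ (μ {ω | c ⬝ᵥ (z + e ω) ≤ d}).toReal := by
  set X : Ω → ℝ := fun ω => c ⬝ᵥ e ω with hXdef
  set t : ℝ := d - c ⬝ᵥ z with htdef
  set q : ℝ := stdNormalCDFInv ρ with hqdef
  have hq0 : 0 ≤ q := stdNormalCDF_inv_nonneg hρ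
  have ht0 : Real.sqrt (c ⬝ᵥ V *ᵥ c) * q ≤ t := by rw [htdef]; linarith
  have hVc' : 0 ≤ c ⬝ᵥ V' *ᵥ c := by
    have := hV'.dotProduct_mulVec_nonneg c
    simpa using this
  have hsetq : {ω | c ⬝ᵥ (z + e ω) ≤ d} = X ⁻¹' Set.Iic t := by
    ext ω
    simp only [Set.mem_setOf_eq, Set.mem_preimage, Set.mem_Iic, dotProduct_add, hXdef, htdef]
    constructor <;> intro h <;> linarith
  have hXm : AEMeasurable X μ := aemeasurable_of_map_neZero (by rw [hXdef, hlaw]; infer_instance)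
  have hμ : μ {ω | c ⬝ᵥ (z + e ω) ≤ d}
      = gaussianReal 0 (Real.toNNReal (c ⬝ᵥ V' *ᵥ c)) (Set.Iic t) := by
    rw [hsetq, ← Measure.map_apply_of_aemeasurable hXm measurableSet_Iic, hXdef, hlaw]
  rw [hμ]
  by_cases hv : Real.toNNReal (c ⬝ᵥ V' *ᵥ c) = 0
  · rw [hv, gaussianReal_zero_var]
    have h0t : (0:ℝ) ∈ Set.Iic t :=
      Set.mem_Iic.2 (le_trans (by positivity) ht0)
    rw [Measure.dirac_apply_of_mem h0t]
    simpa using hρ.2.le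
  · set σ : ℝ := Real.sqrt (c ⬝ᵥ V' *ᵥ c) with hσdef
    have hVpos : 0 < c ⬝ᵥ V' *ᵥ c := by
      rcases lt_or_eq_of_le hVc' with h | h
      · exact h
      · exact absurd (by rw [← h]; simp) hv
    have hσpos : 0 < σ := Real.sqrt_pos.2 hVpos
    have hmap2 : gaussianReal 0 (Real.toNNReal (c ⬝ᵥ V' *ᵥ c))
        = (gaussianReal 0 1).map (fun x => σ * x) := by
      rw [gaussianReal_map_const_mul σ]
      congr 1
      · ring
      · ext
        push_cast
        rw [mul_one, hσdef, Real.sq_sqrt hVc', Real.coe_toNNReal _ hVc']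
    rw [hmap2, Measure.map_apply (by fun_prop) measurableSet_Iic]
    have hpre : (fun x => σ * x) ⁻¹' Set.Iic t = Set.Iic (t / σ) := by
      ext x
      simp only [Set.mem_preimage, Set.mem_Iic, le_div_iff₀ hσpos]
      rw [mul_comm]
    rw [hpre]
    have hqt : q ≤ t / σ := by
      rw [le_div_iff₀ hσpos]
      calc q * σ ≤ q * Real.sqrt (c ⬝ᵥ V *ᵥ c) :=
            mul_le_mul_of_nonneg_left (Real.sqrt_le_sqrt hvar) hq0
        _ = Real.sqrt (c ⬝ᵥ V *ᵥ c) * q := mul_comm _ _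
        _ ≤ t := ht0
    calc ρ = stdNormalCDF q := (stdNormalCDF_inv_spec hρ).symm
      _ ≤ stdNormalCDF (t / σ) := stdNormalCDF_mono hqt
      _ = ((gaussianReal 0 1) (Set.Iic (t / σ))).toReal := stdNormalCDF_eq _
end

section
/- (Recursive feasibility candidate) Suppose the terminal set Z_F is invariant under z ↦ (A+BK)z and satisfies the tightened state and input constraints with steady-state variance Ve∞. If (v_0,…,v_{N−1}, z_0,…,z_N, V_0,…,V_N) is a feasible solution of the SMPC problem at time t−1, then the shifted sequence v_k(t) = v_{k+1}(t−1), z_k(t) = z_{k+1}(t−1), V_k(t) = V_{k+1}(t−1), extended by the terminal controller (v_{N−1}(t) = K z_N(t−1), z_N(t) = (A+BK)z_N(t−1), V_N(t) = (A+BK)V_{N−1}(t)(A+BK)ᵀ + Vw), together with ξ(t) = 1, is feasible at time t. -/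
open MeasureTheory ProbabilityTheory Matrix

/-- Theorem 1 (recursive feasibility).  If the terminal set `Z_F` is invariant under
the terminal controller `z ↦ (A+BK)z` and satisfies the tightened state and input
constraints for every variance bounded by the steady-state variance `Ve∞`, and if
`(v, z, V, ξ)` is a feasible solution of the SMPC problem at time `t−1`, then the
shifted sequence, extended by the terminal controller and with interpolation
variable `ξ' = 1`, is feasible at time `t` (for any new measurement `x`). -/
theorem smpc_recursive_feasibility
    {n m : Type*} [Fintype n] [Fintype m]
    (A : Matrix n n ℝ) (B : Matrix n m ℝ) (K : Matrix m n ℝ)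
    (Vw Veinf : Matrix n n ℝ) (hVw : Vw.PosSemidef)
    (N : ℕ) (hN : 0 < N)
    {ncx ncu : ℕ}
    (cx : Fin ncx → (n → ℝ)) (dx ρx : Fin ncx → ℝ)
    (cu : Fin ncu → (m → ℝ)) (du ρu : Fin ncu → ℝ)
    (ZF : Set (n → ℝ))
    -- steady-state variance: Ve∞ = dlyap(A+BK, Vw)
    (hVeinf : (A + B * K) * Veinf * (A + B * K)ᵀ + Vw = Veinf)
    -- invariance of the terminal set under the terminal controller
    (hinv : ∀ z ∈ ZF, (A + B * K) *ᵥ z ∈ ZF)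
    -- terminal set satisfies the tightened constraints with variances bounded by Ve∞
    (hZFx : ∀ z ∈ ZF, ∀ V : Matrix n n ℝ, V.PosSemidef → (Veinf - V).PosSemidef →
      ∀ i, cx i ⬝ᵥ z ≤ dx i - Real.sqrt (cx i ⬝ᵥ V *ᵥ cx i) * stdNormalCDFInv (ρx i))
    (hZFu : ∀ z ∈ ZF, ∀ V : Matrix n n ℝ, V.PosSemidef → (Veinf - V).PosSemidef →
      ∀ j, cu j ⬝ᵥ (K *ᵥ z) ≤ du j
        - Real.sqrt (cu j ⬝ᵥ (K * V * Kᵀ) *ᵥ cu j) * stdNormalCDFInv (ρu j))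
    -- feasible solution at time t−1 (with measurement xprev and previous
    -- interpolation data zinterp, Vinterp), and new measurement x at time t
    (xprev x zinterp : n → ℝ) (Vinterp : Matrix n n ℝ)
    (v : ℕ → m → ℝ) (z : ℕ → n → ℝ) (V : ℕ → Matrix n n ℝ) (ξ : ℝ)
    (hdyn : ∀ k < N, z (k + 1) = A *ᵥ z k + B *ᵥ v k)
    (hVdyn : ∀ k < N, V (k + 1) = (A + B * K) * V k * (A + B * K)ᵀ + Vw)
    (hinit : z 0 = (1 - ξ) • xprev + ξ • zinterp)
    (hVinit : V 0 = ξ ^ 2 • Vinterp)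
    (hVpsd : ∀ k ≤ N, (V k).PosSemidef)
    (hccx : ∀ k < N, ∀ i, cx i ⬝ᵥ z k
      ≤ dx i - Real.sqrt (cx i ⬝ᵥ (V k) *ᵥ cx i) * stdNormalCDFInv (ρx i))
    (hccu : ∀ k < N, ∀ j, cu j ⬝ᵥ v k
      ≤ du j - Real.sqrt (cu j ⬝ᵥ (K * V k * Kᵀ) *ᵥ cu j) * stdNormalCDFInv (ρu j))
    (hterm : z N ∈ ZF)
    (hξ : ξ ∈ Set.Icc (0 : ℝ) 1)
    (hVbound : ∀ k ≤ N, (Veinf - V k).PosSemidef) :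
    ∃ (v' : ℕ → m → ℝ) (z' : ℕ → n → ℝ) (V' : ℕ → Matrix n n ℝ) (ξ' : ℝ),
      -- the candidate is the shifted previous solution with the terminal controller
      (∀ k < N - 1, v' k = v (k + 1)) ∧ v' (N - 1) = K *ᵥ z N ∧
      (∀ k < N, z' k = z (k + 1)) ∧ z' N = (A + B * K) *ᵥ z N ∧
      (∀ k < N, V' k = V (k + 1)) ∧
      V' N = (A + B * K) * V' (N - 1) * (A + B * K)ᵀ + Vw ∧
      ξ' = 1 ∧
      -- and it is feasible at time t:
      (∀ k < N, z' (k + 1) = A *ᵥ z' k + B *ᵥ v' k) ∧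
      (∀ k < N, V' (k + 1) = (A + B * K) * V' k * (A + B * K)ᵀ + Vw) ∧
      z' 0 = (1 - ξ') • x + ξ' • z 1 ∧
      V' 0 = ξ' ^ 2 • V 1 ∧
      (∀ k ≤ N, (V' k).PosSemidef) ∧
      (∀ k < N, ∀ i, cx i ⬝ᵥ z' k
        ≤ dx i - Real.sqrt (cx i ⬝ᵥ (V' k) *ᵥ cx i) * stdNormalCDFInv (ρx i)) ∧
      (∀ k < N, ∀ j, cu j ⬝ᵥ v' k
        ≤ du j - Real.sqrt (cu j ⬝ᵥ (K * V' k * Kᵀ) *ᵥ cu j) * stdNormalCDFInv (ρu j)) ∧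
      z' N ∈ ZF ∧ ξ' ∈ Set.Icc (0 : ℝ) 1 ∧
      (∀ k ≤ N, (Veinf - V' k).PosSemidef) := by
  have hAB : ∀ (M : Matrix n n ℝ), M.PosSemidef →
      ((A + B * K) * M * (A + B * K)ᵀ).PosSemidef := by
    intro M hM
    have := hM.mul_mul_conjTranspose_same (A + B * K)
    simpa [Matrix.conjTranspose_eq_transpose_of_trivial] using this
  refine ⟨(fun k => if k < N - 1 then v (k + 1) else K *ᵥ z N),
    (fun k => if k < N then z (k + 1) else (A + B * K) *ᵥ z N),
    (fun k => if k < N then V (k + 1) else (A + B * K) * V N * (A + B * K)ᵀ + Vw),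
    1, ?_, ?_, ?_, ?_, ?_, ?_, rfl, ?_, ?_, ?_, ?_, ?_, ?_, ?_, ?_, ?_, ?_⟩
  · intro k hk; simp [hk]
  · simp
  · intro k hk; simp [hk]
  · simp
  · intro k hk; simp [hk]
  · have h1 : N - 1 < N := Nat.sub_lt hN one_pos
    have h2 : N - 1 + 1 = N := Nat.succ_pred_eq_of_pos hN
    simp [h1, h2]
  · intro k hk
    rcases lt_or_eq_of_le (Nat.succ_le_of_lt hk) with h | h
    · have hk' : k < N - 1 := by omega
      simp only [if_pos h, if_pos hk, if_pos hk']
      exact hdyn (k + 1) h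
    · have hk' : ¬ (k < N - 1) := by omega
      have hkk : k + 1 = N := h
      simp only [hkk, if_neg (lt_irrefl N), if_pos hk, if_neg hk']
      rw [Matrix.add_mulVec, Matrix.mulVec_mulVec]
  · intro k hk
    rcases lt_or_eq_of_le (Nat.succ_le_of_lt hk) with h | h
    · simp only [if_pos h, if_pos hk]
      exact hVdyn (k + 1) h
    · have hkk : k + 1 = N := h
      simp only [hkk, if_neg (lt_irrefl N), if_pos hk]
  · simp [hN]
  · simp [hN]
  · intro k hk
    rcases lt_or_eq_of_le hk with h | h
    · simp only [if_pos h]; exact hVpsd (k + 1) h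
    · simp only [h, if_neg (lt_irrefl N)]
      exact ((hAB _ (hVpsd N le_rfl)).add hVw)
  · intro k hk i
    rcases lt_or_eq_of_le (Nat.succ_le_of_lt hk) with h | h
    · simp only [if_pos hk]; exact hccx (k + 1) h i
    · have hkk : k + 1 = N := h
      have hkN : k = N - 1 := by omega
      simp only [if_pos hk, (by omega : k + 1 = N)]
      exact hZFx (z N) hterm (V N) (hVpsd N le_rfl) (hVbound N le_rfl) i
  · intro k hk j
    rcases lt_or_eq_of_le (Nat.succ_le_of_lt hk) with h | h
    · have hk' : k < N - 1 := by omega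
      simp only [if_pos hk, if_pos hk']
      exact hccu (k + 1) h j
    · have hk' : ¬ (k < N - 1) := by omega
      simp only [if_pos hk, if_neg hk', (by omega : k + 1 = N)]
      rw [(by omega : k + 1 = N)]; exact hZFu (z N) hterm (V N) (hVpsd N le_rfl) (hVbound N le_rfl) j
  · simp only [if_neg (lt_irrefl N)]
    exact hinv (z N) hterm
  · exact ⟨zero_le_one, le_rfl⟩
  · intro k hk
    rcases lt_or_eq_of_le hk with h | h
    · simp only [if_pos h]; exact hVbound (k + 1) h
    · simp only [h, if_neg (lt_irrefl N)]
      have key : Veinf - ((A + B * K) * V N * (A + B * K)ᵀ + Vw)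
          = (A + B * K) * (Veinf - V N) * (A + B * K)ᵀ := by
        have h2 : (A + B * K) * (Veinf - V N) * (A + B * K)ᵀ
            = (A + B * K) * Veinf * (A + B * K)ᵀ - (A + B * K) * V N * (A + B * K)ᵀ := by
          rw [Matrix.mul_sub, Matrix.sub_mul]
        rw [h2]
        conv_lhs => rw [← hVeinf]
        abel
      rw [key]
      exact hAB _ (hVbound N le_rfl)
end
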